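/- Let p1, p0, q1, q0 be real numbers with q1 ≠ p1 such that S0 = 0, Δ1 ≥ 0 and Δ2 ≥ 0, where S0 = (p0 − q0)² − (p1 − q1)·(p0·q1 − q0·p1), Δ1 = p1² − 4·p0 and Δ2 = q1² − 4·q0. Then z0 = (p0 − q0)/(q1 − p1) is the unique real number z satisfying z² + p1·z + p0 = 0 and z² + q1·z + q0 = 0. -/

import Mathlib

/-- At a point of the cutcurve with q1 ≠ p1, the lifting
    z0 = (p0 − q0)/(q1 − p1) is the unique common real root of the two
    monic quadratics. -/
theorem stmt_17 (p1 p0 q1 q0 : ℝ) (hne : q1 ≠ p1)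
    (hS0 : (p0 - q0) ^ 2 - (p1 - q1) * (p0 * q1 - q0 * p1) = 0)
    (hD1 : p1 ^ 2 - 4 * p0 ≥ 0)
    (hD2 : q1 ^ 2 - 4 * q0 ≥ 0) :
    ((p0 - q0) / (q1 - p1)) ^ 2 + p1 * ((p0 - q0) / (q1 - p1)) + p0 = 0 ∧
    ((p0 - q0) / (q1 - p1)) ^ 2 + q1 * ((p0 - q0) / (q1 - p1)) + q0 = 0 ∧
    ∀ z : ℝ, z ^ 2 + p1 * z + p0 = 0 → z ^ 2 + q1 * z + q0 = 0 →
      z = (p0 - q0) / (q1 - p1) := by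
  have hd : q1 - p1 ≠ 0 := sub_ne_zero.mpr hne
  refine ⟨?_, ?_, ?_⟩
  · field_simp
    linear_combination hS0
  · field_simp
    linear_combination hS0
  · intro z h1 h2
    rw [eq_div_iff hd]
    linear_combination h2 - h1
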